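/- For λ = r (and s ≠ 0), the operator U(s,0,s) − 0 = U(s,r,s) − rI on ℓ_p is injective but not surjective; in particular r belongs to the spectrum of U(s,r,s) on ℓ_p. -/

import Mathlib

open scoped ENNReal
open Real Set

/-- The tridiagonal operator U(s,r,s) acting on sequences, with x_{-1} = 0. -/
noncomputable def Ufun (s r : ℂ) (x : ℕ → ℂ) : ℕ → ℂ :=
  fun k => (if k = 0 then 0 else s * x (k - 1)) + r * x k + s * x (k + 1)

lemma subseq_zero {p : ℝ≥0∞} (hp0 : 0 < p.toReal) [Fact (1 ≤ p)]
    (x : lp (fun _ : ℕ => ℂ) p) (f : ℕ → ℕ) (hf : Function.Injective f) (c : ℂ)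
    (h : ∀ m, ‖(x : ℕ → ℂ) (f m)‖ = ‖c‖) : c = 0 := by
  have hsum : Summable fun k => ‖(x : ℕ → ℂ) k‖ ^ p.toReal := (lp.memℓp x).summable hp0
  have hsum2 : Summable fun m => ‖(x : ℕ → ℂ) (f m)‖ ^ p.toReal :=
    hsum.comp_injective hf
  have : (fun m : ℕ => ‖(x : ℕ → ℂ) (f m)‖ ^ p.toReal) = fun _ => ‖c‖ ^ p.toReal := by
    funext m; rw [h m]
  rw [this, summable_const_iff] at hsum2
  have := (Real.rpow_eq_zero (norm_nonneg c) hp0.ne').mp hsum2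
  simpa using this

theorem stmt9 (r s : ℂ) (hs : s ≠ 0) (p : ℝ≥0∞) (hp : 1 < p) (hp' : p ≠ ∞) [Fact (1 ≤ p)]
    (T : lp (fun _ : ℕ => ℂ) p →L[ℂ] lp (fun _ : ℕ => ℂ) p)
    (hT : ∀ (x : lp (fun _ : ℕ => ℂ) p) (k : ℕ), T x k = Ufun s r ↑x k) :
    Function.Injective ⇑(T - r • 1) ∧ ¬ Function.Surjective ⇑(T - r • 1) ∧
      r ∈ spectrum ℂ T := by
  have hp0 : 0 < p.toReal := ENNReal.toReal_pos (zero_lt_one.trans hp).ne' hp'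
  -- coordinates of (T - r•1) x
  have Vcoord : ∀ (x : lp (fun _ : ℕ => ℂ) p) (k : ℕ),
      ((T - r • 1) x : ℕ → ℂ) k = (if k = 0 then 0 else s * x (k - 1)) + s * x (k + 1) := by
    intro x k
    have : ((T - r • 1) x : ℕ → ℂ) k = T x k - r * x k := by
      simp [ContinuousLinearMap.sub_apply, ContinuousLinearMap.smul_apply,
        ContinuousLinearMap.one_apply]
      rfl
    rw [this, hT, Ufun]; ring
  have par : ∀ (x : lp (fun _ : ℕ => ℂ) p), (∀ k, (x : ℕ → ℂ) (k + 2) = - x k) →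
      ∀ a m, (x : ℕ → ℂ) (a + 2 * m) = (-1) ^ m * x a := by
    intro x hrec a m
    induction m with
    | zero => simp
    | succ n ih =>
        have : a + 2 * (n + 1) = (a + 2 * n) + 2 := by ring
        rw [this, hrec, ih]; ring
  have key : ∀ (x : lp (fun _ : ℕ => ℂ) p), (∀ k, (x : ℕ → ℂ) (k + 2) = - x k) →
      ∀ a, (x : ℕ → ℂ) a = 0 := by
    intro x hrec a
    refine subseq_zero hp0 x (fun m => a + 2 * m) ?_ _ ?_
    · intro m₁ m₂ h
      simp only at h; omega
    · intro m
      rw [par x hrec a m]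
      simp
  -- recurrence extraction
  have getrec : ∀ (x : lp (fun _ : ℕ => ℂ) p),
      (∀ k, ((T - r • 1) x : ℕ → ℂ) (k + 1) = 0) →
      ∀ k, (x : ℕ → ℂ) (k + 2) = - x k := by
    intro x hc k
    have h' := hc k
    rw [Vcoord] at h'
    simp only [Nat.succ_ne_zero, if_neg, if_false, Nat.add_sub_cancel,
      show k + 1 + 1 = k + 2 from rfl] at h'
    refine mul_left_cancel₀ hs ?_
    linear_combination h'
  have hinj : Function.Injective ⇑(T - r • 1) := by
    have h0 : ∀ x : lp (fun _ : ℕ => ℂ) p, (T - r • 1) x = 0 → x = 0 := by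
      intro x hx
      have hc : ∀ k, ((T - r • 1) x : ℕ → ℂ) k = 0 := by
        intro k; rw [hx]; simp
      have hrec := getrec x (fun k => hc (k + 1))
      exact lp.ext (funext fun k => key x hrec k)
    intro a b hab
    have h1 : (T - r • 1) (a - b) = 0 := by rw [map_sub, hab, sub_self]
    exact sub_eq_zero.mp (h0 _ h1)
  have hns : ¬ Function.Surjective ⇑(T - r • 1) := by
    intro hsurj
    obtain ⟨x, hx⟩ := hsurj (lp.single p 0 (1 : ℂ))
    have hc : ∀ k, ((T - r • 1) x : ℕ → ℂ) k
        = ((lp.single p 0 (1 : ℂ) : lp (fun _ : ℕ => ℂ) p) : ℕ → ℂ) k := by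
      intro k; rw [hx]
    have hrec : ∀ k, (x : ℕ → ℂ) (k + 2) = - x k := by
      refine getrec x ?_
      intro k
      rw [hc (k + 1), lp.single_apply_ne p 0 _ (Nat.succ_ne_zero k)]
    have h1 : s * (x : ℕ → ℂ) 1 = 1 := by
      have h' := hc 0
      rw [Vcoord, lp.single_apply_self] at h'
      simpa using h'
    have hx1 : (x : ℕ → ℂ) 1 = 0 := by
      refine subseq_zero hp0 x (fun m => 1 + 2 * m) ?_ _ ?_
      · intro m₁ m₂ h; simp only at h; omega
      · intro m; rw [par x hrec 1 m]; simp
    rw [hx1, mul_zero] at h1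
    exact zero_ne_one h1
  refine ⟨hinj, hns, ?_⟩
  rw [spectrum.mem_iff]
  intro hu
  obtain ⟨u, hu⟩ := hu
  refine hns ?_
  intro y
  set v : lp (fun _ : ℕ => ℂ) p →L[ℂ] lp (fun _ : ℕ => ℂ) p := ↑u⁻¹ with hv
  refine ⟨v (-y), ?_⟩
  have h1 : T - r • 1 = -((algebraMap ℂ _) r - T) := by
    rw [Algebra.algebraMap_eq_smul_one]; abel
  have h2 : ((algebraMap ℂ _) r - T) (v (-y)) = -y := by
    rw [← hu]
    have h3 : ((u : lp (fun _ : ℕ => ℂ) p →L[ℂ] lp (fun _ : ℕ => ℂ) p) * v) = 1 := by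
      rw [hv]; exact u.mul_inv
    calc (u : lp (fun _ : ℕ => ℂ) p →L[ℂ] lp (fun _ : ℕ => ℂ) p) (v (-y))
        = ((u : lp (fun _ : ℕ => ℂ) p →L[ℂ] lp (fun _ : ℕ => ℂ) p) * v) (-y) := rfl
      _ = -y := by rw [h3]; rfl
  rw [h1]
  simp only [ContinuousLinearMap.neg_apply, h2, neg_neg]
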